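/- There is a family ℋ of at most ℵ₁ many dense subsets of P(T) such that for every filter G on P(T) meeting each member of ℋ: the relation <* = ⋃{<ₚ : p ∈ G} makes V = ⋃{vᵖ : p ∈ G} an Aronszajn tree, and f = ⋃{fᵖ : p ∈ G} is a weak embedding from T into (V, <*) whose values satisfy ht(f(ρ)) = lg(ρ) for every ρ ∈ T. -/

import Mathlib

universe u

open Cardinal Ordinal Set Classical

noncomputable def omega1 : Ordinal.{u} := (Cardinal.aleph 1).ord

/-- The ordinal below `ω₁` coded by an element of `omega1.ToType`. -/
noncomputable def oVal (γ : omega1.{0}.ToType) : Ordinal.{0} :=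
  ((Ordinal.ToType.mk (o := omega1.{0})).symm γ : Set.Iio omega1.{0})

/-- `ht γ`: the unique `α` with `ω·α ≤ γ < ω·α + ω`, i.e. `γ / ω`. -/
noncomputable def htOf (γ : omega1.{0}.ToType) : Ordinal.{0} := oVal γ / Ordinal.omega0

/-- Codes for the nodes of `T`: partial functions on `ω₁` with values in `ω₁`,
representing functions `ρ : β → ω₁` for countable ordinals `β = lg ρ`. -/
abbrev Sseq : Type := omega1.{0}.ToType → Option omega1.{0}.ToType

/-- A code is a genuine sequence if its domain is a proper initial segment of `ω₁`. -/
def IsSeqOK (ρ : Sseq) : Prop :=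
  (∀ ξ η : omega1.{0}.ToType, ξ < η → ρ η ≠ none → ρ ξ ≠ none) ∧ ∃ ξ, ρ ξ = none

/-- The length of a sequence: the least point where it is undefined. -/
noncomputable def lg (ρ : Sseq) : Ordinal.{0} := sInf (oVal '' {ξ | ρ ξ = none})

/-- The (non-strict) extension order on sequences. -/
def seqLE (ρ τ : Sseq) : Prop := ∀ ξ a, ρ ξ = some a → τ ξ = some a

/-- The strict extension order on sequences. -/
def seqLT (ρ τ : Sseq) : Prop := seqLE ρ τ ∧ ρ ≠ τ

/-- `ρ ∩ τ`: the longest common initial segment of `ρ` and `τ`. -/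
noncomputable def meetSeq (ρ τ : Sseq) : Sseq :=
  fun ξ => if ∀ η, η ≤ ξ → ρ η = τ η then ρ ξ else none

/-- The restriction of `ρ` to the initial segment below `b`. -/
noncomputable def restrictSeq (ρ : Sseq) (b : omega1.{0}.ToType) : Sseq :=
  fun ξ => if ξ < b then ρ ξ else none

/-- The empty sequence. -/
def emptySeq : Sseq := fun _ => none

/-- The ambient tree `T` of the forcing `P(T)`: a set of sequences of countable length,
containing the empty sequence, closed under restrictions to initial segments, of
cardinality `ℵ₁`, ordered by strict extension, with no uncountable chain. -/
def PAmbientOK (Tc : Set Sseq) : Prop :=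
  (∀ ρ ∈ Tc, IsSeqOK ρ) ∧
  emptySeq ∈ Tc ∧
  (∀ ρ ∈ Tc, ∀ b : omega1.{0}.ToType, restrictSeq ρ b ∈ Tc) ∧
  Cardinal.mk Tc = Cardinal.aleph.{0} 1 ∧
  ∀ C ⊆ Tc, (∀ ρ ∈ C, ∀ τ ∈ C, ρ ≠ τ → seqLE ρ τ ∨ seqLE τ ρ) → C.Countable

/-- A condition of the forcing `P(T)`. -/
structure PCond : Type where
  u : Finset Sseq
  v : Finset omega1.{0}.ToType
  lt : omega1.{0}.ToType → omega1.{0}.ToType → Prop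
  f : Sseq → Option omega1.{0}.ToType
  c : omega1.{0}.ToType → Option ℕ

/-- The requirements making `p` a condition of `P(T)`. -/
structure PValid (Tc : Set Sseq) (p : PCond) : Prop where
  u_sub : ∀ ρ ∈ p.u, ρ ∈ Tc
  u_root : emptySeq ∈ p.u
  u_meet : ∀ ρ ∈ p.u, ∀ τ ∈ p.u, meetSeq ρ τ ∈ p.u
  lt_dom : ∀ a b, p.lt a b → a ∈ p.v ∧ b ∈ p.v
  lt_irrefl : ∀ a, ¬ p.lt a a
  lt_trans : ∀ a b c, p.lt a b → p.lt b c → p.lt a c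
  lt_ht : ∀ a b, p.lt a b → htOf a < htOf b
  lt_pred_linear : ∀ a b c, p.lt a c → p.lt b c → p.lt a b ∨ p.lt b a ∨ a = b
  f_dom : ∀ ρ : Sseq, p.f ρ ≠ none ↔ ρ ∈ p.u
  f_ran : ∀ ρ a, p.f ρ = some a → a ∈ p.v
  f_surj : ∀ a ∈ p.v, ∃ ρ ∈ p.u, p.f ρ = some a
  f_mono : ∀ ρ ∈ p.u, ∀ τ ∈ p.u, seqLT ρ τ →
    ∀ a b, p.f ρ = some a → p.f τ = some b → p.lt a b
  f_ht : ∀ ρ a, p.f ρ = some a → htOf a = lg ρ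
  c_dom : ∀ a, p.c a ≠ none ↔ a ∈ p.v
  c_spec : ∀ a b, p.lt a b → p.c a ≠ p.c b

/-- The extension order of `P(T)`. -/
def PLe (p q : PCond) : Prop :=
  p.u ⊆ q.u ∧ p.v ⊆ q.v ∧ (∀ a b, p.lt a b → q.lt a b) ∧
  (∀ ρ a, p.f ρ = some a → q.f ρ = some a) ∧
  ∀ a n, p.c a = some n → q.c a = some n


/-- `lt` is a strict partial order with field inside `A`. -/
def StrictOrderOn {X : Type*} (A : Set X) (lt : X → X → Prop) : Prop :=
  (∀ x y, lt x y → x ∈ A ∧ y ∈ A) ∧ (∀ x, ¬ lt x x) ∧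
    ∀ x y z, lt x y → lt y z → lt x z

/-- `lt` is a tree order on `A`: a strict partial order whose sets of strict
predecessors are well-ordered. -/
def TreeOrderOn {X : Type*} (A : Set X) (lt : X → X → Prop) : Prop :=
  StrictOrderOn A lt ∧
  (∀ x ∈ A, ∀ y z, lt y x → lt z x → lt y z ∨ lt z y ∨ y = z) ∧
  ∀ x ∈ A, Set.WellFoundedOn {y | lt y x} lt

/-- The height of `x`: the order type of its set of strict `lt`-predecessors. -/
noncomputable def relHeight {X : Type u} (lt : X → X → Prop) (x : X) : Ordinal.{u} :=
  if h : IsWellOrder {y : X // lt y x} (fun a b => lt a.1 b.1) then @Ordinal.type _ _ h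
  else 0

/-- `(A, lt)` is an Aronszajn tree: a tree of height `ω₁` with countable levels and no
uncountable chain. -/
def AronszajnOn {X : Type u} (A : Set X) (lt : X → X → Prop) : Prop :=
  TreeOrderOn A lt ∧
  (∀ α : Ordinal.{u}, α < omega1.{u} → ∃ x ∈ A, relHeight lt x = α) ∧
  (∀ x ∈ A, relHeight lt x < omega1.{u}) ∧
  (∀ α : Ordinal.{u}, {x ∈ A | relHeight lt x = α}.Countable) ∧
  ∀ C ⊆ A, (∀ x ∈ C, ∀ y ∈ C, x ≠ y → lt x y ∨ lt y x) → C.Countable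


lemma oVal_lt (γ : omega1.{0}.ToType) : oVal γ < omega1.{0} :=
  (((Ordinal.ToType.mk (o := omega1.{0}))).symm γ).2
lemma oVal_lt_iff {γ δ : omega1.{0}.ToType} : oVal γ < oVal δ ↔ γ < δ := by
  rw [oVal, oVal, Subtype.coe_lt_coe, OrderIso.lt_iff_lt]
lemma oVal_le_iff {γ δ : omega1.{0}.ToType} : oVal γ ≤ oVal δ ↔ γ ≤ δ := by
  rw [oVal, oVal, Subtype.coe_le_coe, OrderIso.le_iff_le]
lemma oVal_inj {γ δ : omega1.{0}.ToType} : oVal γ = oVal δ ↔ γ = δ :=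
  ⟨fun h => le_antisymm (oVal_le_iff.1 h.le) (oVal_le_iff.1 h.ge), fun h => h ▸ rfl⟩
lemma oVal_surj {o : Ordinal.{0}} (ho : o < omega1.{0}) : ∃ γ, oVal γ = o := by
  refine ⟨(Ordinal.ToType.mk (o := omega1.{0})) ⟨o, ho⟩, ?_⟩
  simp [oVal]

-- seq basics
lemma seqLE_refl (ρ : Sseq) : seqLE ρ ρ := fun _ _ h => h
lemma seqLE_trans {ρ τ χ : Sseq} (h1 : seqLE ρ τ) (h2 : seqLE τ χ) : seqLE ρ χ :=
  fun ξ a h => h2 ξ a (h1 ξ a h)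
lemma seqLE_antisymm {ρ τ : Sseq} (h1 : seqLE ρ τ) (h2 : seqLE τ ρ) : ρ = τ := by
  funext ξ
  cases hρ : ρ ξ with
  | some a => exact (h1 ξ a hρ).symm
  | none =>
    cases hτ : τ ξ with
    | some a => exact absurd (h2 ξ a hτ) (by rw [hρ]; simp)
    | none => rfl

lemma lg_none (ρ : Sseq) {ξ} (h : ρ ξ = none) : lg ρ ≤ oVal ξ :=
  csInf_le' ⟨ξ, h, rfl⟩

lemma exists_oVal_lg {ρ : Sseq} (h : IsSeqOK ρ) : ∃ ξ, oVal ξ = lg ρ ∧ ρ ξ = none := by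
  obtain ⟨ξ0, h0⟩ := h.2
  have hne : (oVal '' {ξ | ρ ξ = none}).Nonempty := ⟨oVal ξ0, ξ0, h0, rfl⟩
  have := csInf_mem hne
  obtain ⟨ξ, hξ, hval⟩ := this
  exact ⟨ξ, hval, hξ⟩

lemma isSeqOK_none_iff {ρ : Sseq} (h : IsSeqOK ρ) (ξ : omega1.{0}.ToType) :
    ρ ξ = none ↔ lg ρ ≤ oVal ξ := by
  constructor
  · exact lg_none ρ
  · intro hle
    obtain ⟨ξ0, hv, h0⟩ := exists_oVal_lg h
    rcases eq_or_lt_of_le hle with heq | hlt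
    · rwa [← oVal_inj.1 (hv.trans heq)]
    · by_contra hne
      exact (h.1 ξ0 ξ (oVal_lt_iff.1 (hv ▸ hlt)) hne) h0

lemma isSeqOK_some_iff {ρ : Sseq} (h : IsSeqOK ρ) (ξ : omega1.{0}.ToType) :
    ρ ξ ≠ none ↔ oVal ξ < lg ρ := by
  rw [Ne, isSeqOK_none_iff h, not_le]

lemma lg_lt_omega1 {ρ : Sseq} (h : IsSeqOK ρ) : lg ρ < omega1.{0} := by
  obtain ⟨ξ, hv, _⟩ := exists_oVal_lg h
  exact hv ▸ oVal_lt ξ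

-- restrict basics
lemma restrict_isSeqOK {ρ : Sseq} (h : IsSeqOK ρ) (b : omega1.{0}.ToType) :
    IsSeqOK (restrictSeq ρ b) := by
  constructor
  · intro ξ η hlt hne
    simp only [restrictSeq] at *
    split at hne
    · next hη => rw [if_pos (hlt.trans hη)]; exact h.1 ξ η hlt hne
    · simp at hne
  · exact ⟨b, by simp [restrictSeq]⟩

lemma restrict_seqLE (ρ : Sseq) (b : omega1.{0}.ToType) : seqLE (restrictSeq ρ b) ρ := by
  intro ξ a hx
  simp only [restrictSeq] at hx
  split at hx
  · exact hx
  · simp at hx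

lemma lg_restrict {ρ : Sseq} (h : IsSeqOK ρ) (b : omega1.{0}.ToType) :
    lg (restrictSeq ρ b) = min (oVal b) (lg ρ) := by
  have hok := restrict_isSeqOK h b
  apply le_antisymm
  · rcases le_total (oVal b) (lg ρ) with hle | hle
    · simpa [min_eq_left hle] using lg_none _ (show restrictSeq ρ b b = none by simp [restrictSeq])
    · rw [min_eq_right hle]
      obtain ⟨ξ, hv, h0⟩ := exists_oVal_lg h
      exact hv ▸ lg_none _ (by simp only [restrictSeq]; split <;> simp [h0])
  · rw [lg]
    apply le_csInf (by obtain ⟨ξ,hξ⟩ := hok.2; exact ⟨oVal ξ, ξ, hξ, rfl⟩)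
    rintro o ⟨ξ, hξ, rfl⟩
    simp only [mem_setOf_eq, restrictSeq] at hξ
    split at hξ
    · next hb => exact le_trans (min_le_right _ _) (lg_none ρ hξ)
    · next hb => exact le_trans (min_le_left _ _) (oVal_le_iff.2 (not_lt.1 hb))

lemma restrict_eq_self {ρ : Sseq} (h : IsSeqOK ρ) {b : omega1.{0}.ToType}
    (hb : lg ρ ≤ oVal b) : restrictSeq ρ b = ρ := by
  funext ξ
  simp only [restrictSeq]
  split
  · rfl
  · next hlt =>
    exact ((isSeqOK_none_iff h ξ).2 (le_trans hb (oVal_le_iff.2 (not_lt.1 hlt)))).symm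

lemma seqLE_lg_le {ρ τ : Sseq} (hρ : IsSeqOK ρ) (hτ : IsSeqOK τ) (h : seqLE ρ τ) :
    lg ρ ≤ lg τ := by
  by_contra hlt
  push_neg at hlt
  obtain ⟨ξ, hv, h0⟩ := exists_oVal_lg hτ
  have : ρ ξ ≠ none := (isSeqOK_some_iff hρ ξ).2 (hv ▸ hlt)
  obtain ⟨a, ha⟩ := Option.ne_none_iff_exists'.1 this
  rw [h ξ a ha] at h0; simp at h0

-- a seqLE related to its restriction characterization
lemma eq_restrict_of_seqLE {σ ρ : Sseq} (hσ : IsSeqOK σ) (h : seqLE σ ρ)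
    {b : omega1.{0}.ToType} (hb : oVal b = lg σ) : σ = restrictSeq ρ b := by
  funext ξ
  simp only [restrictSeq]
  split
  · next hlt =>
    have : σ ξ ≠ none := (isSeqOK_some_iff hσ ξ).2 (hb ▸ oVal_lt_iff.2 hlt)
    obtain ⟨a, ha⟩ := Option.ne_none_iff_exists'.1 this
    rw [ha, h ξ a ha]
  · next hlt =>
    exact (isSeqOK_none_iff hσ ξ).2 (hb ▸ oVal_le_iff.2 (not_lt.1 hlt))

lemma seqLT_lg_lt {ρ τ : Sseq} (hρ : IsSeqOK ρ) (hτ : IsSeqOK τ) (h : seqLT ρ τ) :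
    lg ρ < lg τ := by
  rcases eq_or_lt_of_le (seqLE_lg_le hρ hτ h.1) with heq | hlt
  · exfalso
    apply h.2
    obtain ⟨b, hb⟩ := oVal_surj (lg_lt_omega1 hρ)
    rw [eq_restrict_of_seqLE hρ h.1 hb, restrict_eq_self hτ (by rw [hb, ← heq])]
  · exact hlt

lemma seqLE_of_lg_le {σ χ ρ : Sseq} (hσ : IsSeqOK σ) (hχ : IsSeqOK χ)
    (h1 : seqLE σ ρ) (h2 : seqLE χ ρ) (hlg : lg σ ≤ lg χ) : seqLE σ χ := by
  intro ξ a ha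
  have hξ : oVal ξ < lg σ := (isSeqOK_some_iff hσ ξ).1 (by rw [ha]; simp)
  have : χ ξ ≠ none := (isSeqOK_some_iff hχ ξ).2 (lt_of_lt_of_le hξ hlg)
  obtain ⟨c, hc⟩ := Option.ne_none_iff_exists'.1 this
  rw [hc, ← h2 ξ c hc, h1 ξ a ha]

-- meet basics
lemma meet_seqLE_left (ρ τ : Sseq) : seqLE (meetSeq ρ τ) ρ := by
  intro ξ a h
  simp only [meetSeq] at h
  split at h
  · exact h
  · simp at h

lemma meet_comm (ρ τ : Sseq) : meetSeq ρ τ = meetSeq τ ρ := by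
  funext ξ
  simp only [meetSeq]
  by_cases h : ∀ η, η ≤ ξ → ρ η = τ η
  · rw [if_pos h, if_pos (fun η hη => (h η hη).symm), h ξ le_rfl]
  · rw [if_neg h, if_neg (fun h' => h (fun η hη => (h' η hη).symm))]

lemma meet_self (ρ : Sseq) : meetSeq ρ ρ = ρ := by
  funext ξ; simp [meetSeq]

lemma meet_restrict_left (ρ τ : Sseq) (b : omega1.{0}.ToType) :
    meetSeq (restrictSeq ρ b) τ = restrictSeq (meetSeq ρ τ) b := by
  funext ξ
  simp only [meetSeq, restrictSeq]
  by_cases hξ : ξ < b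
  · have : (∀ η, η ≤ ξ → (if η < b then ρ η else none) = τ η) ↔ ∀ η, η ≤ ξ → ρ η = τ η := by
      constructor
      · intro h η hη; have := h η hη; rwa [if_pos (lt_of_le_of_lt hη hξ)] at this
      · intro h η hη; rw [if_pos (lt_of_le_of_lt hη hξ)]; exact h η hη
    rw [if_pos hξ]
    by_cases hg : ∀ η, η ≤ ξ → ρ η = τ η
    · exact (if_pos (this.2 hg)).trans (by rw [if_pos hξ, if_pos hg])
    · exact (if_neg (fun h => hg (this.1 h))).trans (by rw [if_pos hξ, if_neg hg])
  · simp only [if_neg hξ]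
    split
    · rfl
    · rfl

lemma meet_eq_restrict {ρ : Sseq} (hρ : IsSeqOK ρ) (τ : Sseq) :
    ∃ b, meetSeq ρ τ = restrictSeq ρ b := by
  by_cases hd : ∃ ξ, ρ ξ ≠ τ ξ
  · have hwf := (IsWellFounded.wf (α := omega1.{0}.ToType) (r := (· < ·)))
    obtain ⟨b, hb, hmin⟩ := hwf.has_min {ξ | ρ ξ ≠ τ ξ} hd
    refine ⟨b, ?_⟩
    funext ξ
    simp only [meetSeq, restrictSeq]
    by_cases hξ : ξ < b
    · rw [if_pos hξ, if_pos]
      intro η hη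
      by_contra hne
      exact hmin η hne (lt_of_le_of_lt hη hξ)
    · rw [if_neg hξ, if_neg]
      intro h
      exact hb (h b (le_of_not_gt hξ))
  · push_neg at hd
    have heq : τ = ρ := funext fun ξ => (hd ξ).symm
    obtain ⟨b, hb⟩ := hρ.2
    rw [heq, meet_self]
    exact ⟨b, (restrict_eq_self hρ (lg_none ρ hb)).symm⟩


lemma lt_omega1_iff {o : Ordinal.{0}} : o < omega1.{0} ↔ o.card ≤ ℵ₀ := by
  rw [omega1, Cardinal.lt_ord, ← Order.lt_succ_iff, Cardinal.succ_aleph0]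

lemma htOf_lt_omega1 (γ : omega1.{0}.ToType) : htOf γ < omega1.{0} := by
  rw [htOf]
  refine lt_of_le_of_lt ?_ (oVal_lt γ)
  rw [Ordinal.div_le Ordinal.omega0_ne_zero]
  calc oVal γ < Order.succ (oVal γ) := Order.lt_succ _
    _ = 1 * Order.succ (oVal γ) := (one_mul _).symm
    _ ≤ Ordinal.omega0 * Order.succ (oVal γ) :=
        mul_le_mul_left Ordinal.one_lt_omega0.le _

lemma exists_fresh {β : Ordinal.{0}} (hβ : β < omega1.{0}) (v : Finset omega1.{0}.ToType) :
    ∃ a : omega1.{0}.ToType, htOf a = β ∧ a ∉ v := by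
  have hlt : ∀ n : ℕ, Ordinal.omega0 * β + n < omega1.{0} := by
    intro n
    rw [lt_omega1_iff] at *
    rw [Ordinal.card_add, Ordinal.card_mul, Ordinal.card_omega0, Ordinal.card_nat]
    calc ℵ₀ * β.card + (n : Cardinal) ≤ ℵ₀ * ℵ₀ + ℵ₀ := by
          gcongr
          exact (Cardinal.nat_lt_aleph0 n).le
      _ ≤ ℵ₀ := by simp
  choose g hg using fun n : ℕ => oVal_surj (hlt n)
  have hginj : Function.Injective g := by
    intro m n hmn
    have h1 : Ordinal.omega0 * β + m = Ordinal.omega0 * β + n := by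
      rw [← hg m, ← hg n, hmn]
    have h2 : (m : Ordinal.{0}) = n := add_left_cancel h1
    exact_mod_cast h2
  have : ¬ (Set.range g ⊆ (v : Set omega1.{0}.ToType)) := by
    intro hsub
    exact (Set.infinite_range_of_injective hginj) (v.finite_toSet.subset hsub)
  obtain ⟨x, ⟨n, rfl⟩, hx⟩ := Set.not_subset.1 this
  refine ⟨g n, ?_, by simpa using hx⟩
  rw [htOf, hg n, Ordinal.mul_add_div _ Ordinal.omega0_ne_zero,
    Ordinal.div_eq_zero_of_lt (Ordinal.nat_lt_omega0 n), add_zero]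

lemma seqLT_of_le_lg {ρ τ : Sseq} (hρ : IsSeqOK ρ) (hτ : IsSeqOK τ)
    (h : seqLE ρ τ) (hlg : lg ρ < lg τ) : seqLT ρ τ := by
  refine ⟨h, fun he => ?_⟩
  subst he; exact lt_irrefl _ hlg

lemma seqLE_meet {σ τ₁ τ₂ : Sseq} (hσ : IsSeqOK σ) (h1 : seqLE σ τ₁) (h2 : seqLE σ τ₂) :
    seqLE σ (meetSeq τ₁ τ₂) := by
  intro ξ a ha
  simp only [meetSeq]
  rw [if_pos, h1 ξ a ha]
  intro η hη
  have hne : σ η ≠ none := by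
    rcases eq_or_lt_of_le hη with rfl | hlt
    · rw [ha]; simp
    · exact hσ.1 η ξ hlt (by rw [ha]; simp)
  obtain ⟨e, he⟩ := Option.ne_none_iff_exists'.1 hne
  rw [h1 η e he, h2 η e he]

lemma eq_of_seqLE_lg {ρ τ : Sseq} (hρ : IsSeqOK ρ) (hτ : IsSeqOK τ)
    (h : seqLE ρ τ) (hlg : lg τ ≤ lg ρ) : ρ = τ :=
  seqLE_antisymm h (seqLE_of_lg_le hτ hρ (seqLE_refl τ) h hlg)

lemma PLe_refl (p : PCond) : PLe p p :=
  ⟨subset_rfl, subset_rfl, fun _ _ h => h, fun _ _ h => h, fun _ _ h => h⟩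

lemma PLe_trans {p q r : PCond} (h1 : PLe p q) (h2 : PLe q r) : PLe p r :=
  ⟨h1.1.trans h2.1, h1.2.1.trans h2.2.1,
   fun a b h => h2.2.2.1 a b (h1.2.2.1 a b h),
   fun ρ a h => h2.2.2.2.1 ρ a (h1.2.2.2.1 ρ a h),
   fun a n h => h2.2.2.2.2 a n (h1.2.2.2.2 a n h)⟩

lemma PValid.f_some {Tc : Set Sseq} {p : PCond} (hp : PValid Tc p) {τ : Sseq}
    (hτ : τ ∈ p.u) : ∃ a, p.f τ = some a ∧ a ∈ p.v ∧ htOf a = lg τ := by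
  obtain ⟨a, ha⟩ := Option.ne_none_iff_exists'.1 ((hp.f_dom τ).2 hτ)
  exact ⟨a, ha, hp.f_ran τ a ha, hp.f_ht τ a ha⟩

lemma emptySeq_seqLT {σ : Sseq} (h : σ ≠ emptySeq) : seqLT emptySeq σ :=
  ⟨fun ξ a ha => by simp [emptySeq] at ha, fun he => h he.symm⟩

noncomputable instance : DecidableEq Sseq := Classical.decEq _

lemma sup_c_fresh (p : PCond) :
    ∀ y ∈ p.v, p.c y ≠ some ((p.v.sup fun x => (p.c x).getD 0) + 1) := by
  intro y hy hc
  have h1 : (p.c y).getD 0 ≤ p.v.sup fun x => (p.c x).getD 0 :=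
    Finset.le_sup (f := fun x => (p.c x).getD 0) hy
  rw [hc] at h1
  simp only [Option.getD_some] at h1
  omega

lemma extend_one_B {Tc : Set Sseq} {p : PCond} (hT : PAmbientOK Tc) (hp : PValid Tc p)
    {σ : Sseq} (hσT : σ ∈ Tc) (hσu : σ ∉ p.u)
    (hmeet : ∀ τ ∈ p.u, meetSeq σ τ ∈ insert σ p.u)
    (hW : ∀ τ ∈ p.u, ¬ seqLT σ τ) :
    ∃ q, PValid Tc q ∧ PLe p q ∧ q.u = insert σ p.u := by
  classical
  have hσOK := hT.1 σ hσT
  have hOK : ∀ τ ∈ p.u, IsSeqOK τ := fun τ h => hT.1 τ (hp.u_sub τ h)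
  have hσne : σ ≠ emptySeq := fun h => hσu (h ▸ hp.u_root)
  have hPne : (p.u.filter (fun τ => seqLT τ σ)).Nonempty :=
    ⟨emptySeq, Finset.mem_filter.2 ⟨hp.u_root, emptySeq_seqLT hσne⟩⟩
  obtain ⟨τ₁, hτ₁P, hτ₁max⟩ := Finset.exists_max_image _ lg hPne
  have hτ₁u : τ₁ ∈ p.u := (Finset.mem_filter.1 hτ₁P).1
  have hτ₁σ : seqLT τ₁ σ := (Finset.mem_filter.1 hτ₁P).2
  have hmax : ∀ τ ∈ p.u, seqLT τ σ → seqLE τ τ₁ := by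
    intro τ hτ hlt
    exact seqLE_of_lg_le (hOK τ hτ) (hOK τ₁ hτ₁u) hlt.1 hτ₁σ.1
      (hτ₁max τ (Finset.mem_filter.2 ⟨hτ, hlt⟩))
  obtain ⟨d₁, hd₁f, hd₁v, hd₁ht⟩ := hp.f_some hτ₁u
  obtain ⟨a, haht, hav⟩ := exists_fresh (lg_lt_omega1 hσOK) p.v
  obtain ⟨n0, hn0⟩ : ∃ n0 : ℕ, ∀ y ∈ p.v, p.c y ≠ some n0 :=
    ⟨_, sup_c_fresh p⟩
  refine ⟨⟨insert σ p.u, insert a p.v,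
    fun x y => p.lt x y ∨ ((x = d₁ ∨ p.lt x d₁) ∧ y = a),
    fun τ => if τ = σ then some a else p.f τ,
    fun x => if x = a then some n0 else p.c x⟩, ?_, ?_, rfl⟩
  · have hlta : ∀ y, ¬ p.lt a y := fun y h => hav (hp.lt_dom _ _ h).1
    have halty : ∀ x, ¬ p.lt x a := fun x h => hav (hp.lt_dom _ _ h).2
    have had₁ : a ≠ d₁ := fun h => hav (h ▸ hd₁v)
    have hlglt : lg τ₁ < lg σ := seqLT_lg_lt (hOK τ₁ hτ₁u) hσOK hτ₁σ
    constructor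
    case u_sub =>
      intro ρ hρ
      rcases Finset.mem_insert.1 hρ with h | h
      · exact h ▸ hσT
      · exact hp.u_sub ρ h
    case u_root => exact Finset.mem_insert_of_mem hp.u_root
    case u_meet =>
      intro ρ hρ τ hτ
      rcases Finset.mem_insert.1 hρ with h | h
      · rcases Finset.mem_insert.1 hτ with h' | h'
        · rw [h, h', meet_self]; exact Finset.mem_insert_self _ _
        · rw [h]; exact hmeet τ h'
      · rcases Finset.mem_insert.1 hτ with h' | h'
        · rw [h', meet_comm]; exact hmeet ρ h
        · exact Finset.mem_insert_of_mem (hp.u_meet ρ h τ h')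
    case lt_dom =>
      rintro x y (h | ⟨h1, h2⟩)
      · exact ⟨Finset.mem_insert_of_mem (hp.lt_dom _ _ h).1,
          Finset.mem_insert_of_mem (hp.lt_dom _ _ h).2⟩
      · refine ⟨Finset.mem_insert_of_mem ?_, h2 ▸ Finset.mem_insert_self _ _⟩
        rcases h1 with h1 | h1
        · exact h1 ▸ hd₁v
        · exact (hp.lt_dom _ _ h1).1
    case lt_irrefl =>
      rintro x (h | ⟨h1, h2⟩)
      · exact hp.lt_irrefl x h
      · rcases h1 with h1 | h1
        · exact had₁ (h2 ▸ h1)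
        · exact hlta _ (h2 ▸ h1)
    case lt_trans =>
      rintro x y z (h1 | ⟨h1, h1'⟩) (h2 | ⟨h2, h2'⟩)
      · exact Or.inl (hp.lt_trans _ _ _ h1 h2)
      · refine Or.inr ⟨?_, h2'⟩
        rcases h2 with h2 | h2
        · exact Or.inr (h2 ▸ h1)
        · exact Or.inr (hp.lt_trans _ _ _ h1 h2)
      · exact absurd h2 (h1' ▸ hlta _)
      · rcases h2 with h2 | h2
        · exact absurd (h1'.symm.trans h2) had₁
        · exact absurd h2 (h1' ▸ hlta _)
    case lt_ht =>
      rintro x y (h | ⟨h1, h2⟩)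
      · exact hp.lt_ht _ _ h
      · rw [h2, haht]
        rcases h1 with h1 | h1
        · rw [h1, hd₁ht]; exact hlglt
        · exact lt_trans (hd₁ht ▸ hp.lt_ht _ _ h1) hlglt
    case lt_pred_linear =>
      have key : ∀ x y, (x = d₁ ∨ p.lt x d₁) → (y = d₁ ∨ p.lt y d₁) →
          (p.lt x y ∨ ((x = d₁ ∨ p.lt x d₁) ∧ y = a)) ∨
          (p.lt y x ∨ ((y = d₁ ∨ p.lt y d₁) ∧ x = a)) ∨ x = y := by
        intro x y hx hy
        rcases hx with hx | hx <;> rcases hy with hy | hy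
        · exact Or.inr (Or.inr (hx.trans hy.symm))
        · exact Or.inr (Or.inl (Or.inl (hx ▸ hy)))
        · exact Or.inl (Or.inl (hy ▸ hx))
        · rcases hp.lt_pred_linear x y d₁ hx hy with h | h | h
          · exact Or.inl (Or.inl h)
          · exact Or.inr (Or.inl (Or.inl h))
          · exact Or.inr (Or.inr h)
      rintro x y z (h1 | ⟨h1, h1'⟩) (h2 | ⟨h2, h2'⟩)
      · rcases hp.lt_pred_linear x y z h1 h2 with h | h | h
        · exact Or.inl (Or.inl h)
        · exact Or.inr (Or.inl (Or.inl h))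
        · exact Or.inr (Or.inr h)
      · exact absurd h1 (h2' ▸ halty x)
      · exact absurd h2 (h1' ▸ halty y)
      · exact key x y h1 h2
    case f_dom =>
      dsimp only
      intro ρ
      by_cases hρσ : ρ = σ
      · rw [if_pos hρσ, hρσ]
        simp
      · rw [if_neg hρσ, hp.f_dom ρ]
        simp [Finset.mem_insert, hρσ]
    case f_ran =>
      dsimp only
      intro ρ b hb
      by_cases hρσ : ρ = σ
      · rw [if_pos hρσ] at hb
        exact (Option.some_inj.1 hb) ▸ Finset.mem_insert_self _ _
      · rw [if_neg hρσ] at hb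
        exact Finset.mem_insert_of_mem (hp.f_ran ρ b hb)
    case f_surj =>
      dsimp only
      intro b hb
      rcases Finset.mem_insert.1 hb with h | h
      · exact ⟨σ, Finset.mem_insert_self _ _, by rw [if_pos rfl, h]⟩
      · obtain ⟨ρ, hρ, hρf⟩ := hp.f_surj b h
        have hne : ρ ≠ σ := fun he => hσu (he ▸ hρ)
        exact ⟨ρ, Finset.mem_insert_of_mem hρ, by rw [if_neg hne]; exact hρf⟩
    case f_mono =>
      dsimp only
      intro ρ hρ τ hτ hlt b c hb hc
      by_cases hρσ : ρ = σ
      · by_cases hτσ : τ = σ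
        · exact absurd (hρσ.trans hτσ.symm) hlt.2
        · rcases Finset.mem_insert.1 hτ with h | h
          · exact absurd h hτσ
          · exact absurd (hρσ ▸ hlt) (hW τ h)
      · have hρu : ρ ∈ p.u := (Finset.mem_insert.1 hρ).resolve_left hρσ
        rw [if_neg hρσ] at hb
        by_cases hτσ : τ = σ
        · rw [if_pos hτσ] at hc
          have hρltσ : seqLT ρ σ := hτσ ▸ hlt
          have hle : seqLE ρ τ₁ := hmax ρ hρu hρltσ
          refine Or.inr ⟨?_, (Option.some_inj.1 hc).symm⟩
          rcases eq_or_ne ρ τ₁ with he | hne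
          · left
            have hbb : p.f τ₁ = some b := he ▸ hb
            exact Option.some_inj.1 (hbb.symm.trans hd₁f)
          · right
            exact hp.f_mono ρ hρu τ₁ hτ₁u ⟨hle, hne⟩ b d₁ hb hd₁f
        · have hτu : τ ∈ p.u := (Finset.mem_insert.1 hτ).resolve_left hτσ
          rw [if_neg hτσ] at hc
          exact Or.inl (hp.f_mono ρ hρu τ hτu hlt b c hb hc)
    case f_ht =>
      dsimp only
      intro ρ b hb
      by_cases hρσ : ρ = σ
      · rw [if_pos hρσ] at hb
        rw [← Option.some_inj.1 hb, haht, hρσ]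
      · rw [if_neg hρσ] at hb
        exact hp.f_ht ρ b hb
    case c_dom =>
      dsimp only
      intro x
      by_cases hxa : x = a
      · rw [if_pos hxa, hxa]
        simp
      · rw [if_neg hxa, hp.c_dom x]
        simp [Finset.mem_insert, hxa]
    case c_spec =>
      dsimp only
      rintro x y (h | ⟨h1, h2⟩)
      · have hx := (hp.lt_dom _ _ h).1
        have hy := (hp.lt_dom _ _ h).2
        have hxa : x ≠ a := fun he => hav (he ▸ hx)
        have hya : y ≠ a := fun he => hav (he ▸ hy)
        rw [if_neg hxa, if_neg hya]
        exact hp.c_spec x y h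
      · have hx : x ∈ p.v := by
          rcases h1 with h1 | h1
          · exact h1 ▸ hd₁v
          · exact (hp.lt_dom _ _ h1).1
        have hxa : x ≠ a := fun he => hav (he ▸ hx)
        rw [if_neg hxa, h2, if_pos rfl]
        exact hn0 x hx
  · refine ⟨Finset.subset_insert _ _, Finset.subset_insert _ _, fun x y h => Or.inl h, ?_, ?_⟩
    · intro ρ b hb
      have hρu : ρ ∈ p.u := (hp.f_dom ρ).1 (by rw [hb]; simp)
      have hne : ρ ≠ σ := fun he => hσu (he ▸ hρu)
      show (if ρ = σ then some a else p.f ρ) = some b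
      rw [if_neg hne]; exact hb
    · intro x n h
      have hx : x ∈ p.v := (hp.c_dom x).1 (by rw [h]; simp)
      have hxa : x ≠ a := fun he => hav (he ▸ hx)
      show (if x = a then some n0 else p.c x) = some n
      rw [if_neg hxa]; exact h
lemma extend_one_A {Tc : Set Sseq} {p : PCond} (hT : PAmbientOK Tc) (hp : PValid Tc p)
    {σ : Sseq} (hσT : σ ∈ Tc) (hσu : σ ∉ p.u)
    (hmeet : ∀ τ ∈ p.u, meetSeq σ τ ∈ insert σ p.u)
    (hW : ∃ τ ∈ p.u, seqLT σ τ) :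
    ∃ q, PValid Tc q ∧ PLe p q ∧ q.u = insert σ p.u := by
  classical
  have hσOK := hT.1 σ hσT
  have hOK : ∀ τ ∈ p.u, IsSeqOK τ := fun τ h => hT.1 τ (hp.u_sub τ h)
  have hWne : (p.u.filter (fun τ => seqLT σ τ)).Nonempty := by
    obtain ⟨τ, h1, h2⟩ := hW
    exact ⟨τ, Finset.mem_filter.2 ⟨h1, h2⟩⟩
  obtain ⟨τ₀, hτ₀W, hτ₀min⟩ := Finset.exists_min_image _ lg hWne
  have hτ₀u : τ₀ ∈ p.u := (Finset.mem_filter.1 hτ₀W).1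
  have hστ₀ : seqLT σ τ₀ := (Finset.mem_filter.1 hτ₀W).2
  have hmin : ∀ τ ∈ p.u, seqLT σ τ → seqLE τ₀ τ := by
    intro τ hτ hlt
    have hmu : meetSeq τ₀ τ ∈ p.u := hp.u_meet τ₀ hτ₀u τ hτ
    have hmOK : IsSeqOK (meetSeq τ₀ τ) := hOK _ hmu
    have hσm : seqLE σ (meetSeq τ₀ τ) := seqLE_meet hσOK hστ₀.1 hlt.1
    have hσmne : σ ≠ meetSeq τ₀ τ := fun he => hσu (he ▸ hmu)
    have hmW : meetSeq τ₀ τ ∈ p.u.filter (fun τ => seqLT σ τ) :=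
      Finset.mem_filter.2 ⟨hmu, hσm, hσmne⟩
    have hlg : lg τ₀ ≤ lg (meetSeq τ₀ τ) := hτ₀min _ hmW
    have hme : meetSeq τ₀ τ = τ₀ :=
      eq_of_seqLE_lg hmOK (hOK τ₀ hτ₀u) (meet_seqLE_left τ₀ τ) hlg
    rw [← hme, meet_comm]
    exact meet_seqLE_left τ τ₀
  obtain ⟨b₀, hb₀f, hb₀v, hb₀ht⟩ := hp.f_some hτ₀u
  have hlgσ₀ : lg σ < lg τ₀ := seqLT_lg_lt hσOK (hOK τ₀ hτ₀u) hστ₀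
  -- image of extensions of σ is above or equal b₀
  have hUpf : ∀ τ ∈ p.u, seqLT σ τ → ∀ e, p.f τ = some e → e = b₀ ∨ p.lt b₀ e := by
    intro τ hτ hlt e he
    rcases eq_or_ne τ₀ τ with rfl | hne
    · exact Or.inl (Option.some_inj.1 (he.symm.trans hb₀f))
    · exact Or.inr (hp.f_mono τ₀ hτ₀u τ hτ ⟨hmin τ hτ hlt, hne⟩ b₀ e hb₀f he)
  -- image of strict initial segments of σ sits strictly below b₀ at low height
  have hDownf : ∀ ρ ∈ p.u, seqLT ρ σ → ∀ e, p.f ρ = some e →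
      p.lt e b₀ ∧ htOf e < lg σ := by
    intro ρ hρ hlt e he
    have h1 : seqLT ρ τ₀ := ⟨seqLE_trans hlt.1 hστ₀.1, by
      intro hcon
      have h2 : lg ρ < lg σ := seqLT_lg_lt (hOK ρ hρ) hσOK hlt
      have h3 : lg σ < lg ρ := by rw [hcon]; exact hlgσ₀
      exact absurd h2 (asymm h3)⟩
    refine ⟨hp.f_mono ρ hρ τ₀ hτ₀u h1 e b₀ he hb₀f, ?_⟩
    rw [hp.f_ht ρ e he]
    exact seqLT_lg_lt (hOK ρ hρ) hσOK hlt
  by_cases hA1 : ∃ c, p.lt c b₀ ∧ htOf c = lg σ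
  · -- reuse case: no new point needed
    obtain ⟨c, hcb₀, hcht⟩ := hA1
    have hcv : c ∈ p.v := (hp.lt_dom _ _ hcb₀).1
    refine ⟨⟨insert σ p.u, p.v, p.lt,
      fun τ => if τ = σ then some c else p.f τ, p.c⟩, ?_, ?_, rfl⟩
    · refine ⟨?_, ?_, ?_, ?_, ?_, ?_, ?_, ?_, ?_, ?_, ?_, ?_, ?_, ?_, ?_⟩
      · -- u_sub
        intro ρ hρ
        rcases Finset.mem_insert.1 hρ with h | h
        · exact h ▸ hσT
        · exact hp.u_sub ρ h
      · exact Finset.mem_insert_of_mem hp.u_root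
      · -- u_meet
        intro ρ hρ τ hτ
        rcases Finset.mem_insert.1 hρ with h | h
        · rcases Finset.mem_insert.1 hτ with h' | h'
          · rw [h, h', meet_self]; exact Finset.mem_insert_self _ _
          · rw [h]; exact hmeet τ h'
        · rcases Finset.mem_insert.1 hτ with h' | h'
          · rw [h', meet_comm]; exact hmeet ρ h
          · exact Finset.mem_insert_of_mem (hp.u_meet ρ h τ h')
      · exact hp.lt_dom
      · exact hp.lt_irrefl
      · exact hp.lt_trans
      · exact hp.lt_ht
      · exact hp.lt_pred_linear
      · -- f_dom
        dsimp only
        intro ρ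
        by_cases hρσ : ρ = σ
        · rw [if_pos hρσ, hρσ]; simp
        · rw [if_neg hρσ, hp.f_dom ρ]
          simp [Finset.mem_insert, hρσ]
      · -- f_ran
        dsimp only
        intro ρ b hb
        by_cases hρσ : ρ = σ
        · rw [if_pos hρσ] at hb
          exact (Option.some_inj.1 hb) ▸ hcv
        · rw [if_neg hρσ] at hb
          exact hp.f_ran ρ b hb
      · -- f_surj
        dsimp only
        intro b hb
        obtain ⟨ρ, hρ, hρf⟩ := hp.f_surj b hb
        have hne : ρ ≠ σ := fun he => hσu (he ▸ hρ)
        exact ⟨ρ, Finset.mem_insert_of_mem hρ, by rw [if_neg hne]; exact hρf⟩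
      · -- f_mono
        dsimp only
        intro ρ hρ τ hτ hlt b e hb he
        by_cases hρσ : ρ = σ
        · by_cases hτσ : τ = σ
          · exact absurd (hρσ.trans hτσ.symm) hlt.2
          · have hτu : τ ∈ p.u := (Finset.mem_insert.1 hτ).resolve_left hτσ
            rw [if_pos hρσ] at hb
            rw [if_neg hτσ] at he
            have hbc : b = c := (Option.some_inj.1 hb).symm
            rcases hUpf τ hτu (hρσ ▸ hlt) e he with rfl | h
            · exact hbc ▸ hcb₀
            · exact hbc ▸ hp.lt_trans c b₀ e hcb₀ h
        · have hρu : ρ ∈ p.u := (Finset.mem_insert.1 hρ).resolve_left hρσ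
          rw [if_neg hρσ] at hb
          by_cases hτσ : τ = σ
          · rw [if_pos hτσ] at he
            have hec : e = c := (Option.some_inj.1 he).symm
            obtain ⟨h1, h2⟩ := hDownf ρ hρu (hτσ ▸ hlt) b hb
            rw [hec]
            rcases hp.lt_pred_linear b c b₀ h1 hcb₀ with h | h | h
            · exact h
            · exact absurd h2 (asymm (hcht ▸ hp.lt_ht c b h))
            · exact absurd (h ▸ h2) (by rw [hcht]; exact lt_irrefl _)
          · have hτu : τ ∈ p.u := (Finset.mem_insert.1 hτ).resolve_left hτσ
            rw [if_neg hτσ] at he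
            exact hp.f_mono ρ hρu τ hτu hlt b e hb he
      · -- f_ht
        dsimp only
        intro ρ b hb
        by_cases hρσ : ρ = σ
        · rw [if_pos hρσ] at hb
          rw [← Option.some_inj.1 hb, hcht, hρσ]
        · rw [if_neg hρσ] at hb
          exact hp.f_ht ρ b hb
      · exact hp.c_dom
      · exact hp.c_spec
    · refine ⟨Finset.subset_insert _ _, subset_rfl, fun x y h => h, ?_, fun x n h => h⟩
      intro ρ b hb
      have hρu : ρ ∈ p.u := (hp.f_dom ρ).1 (by rw [hb]; simp)
      have hne : ρ ≠ σ := fun he => hσu (he ▸ hρu)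
      show (if ρ = σ then some c else p.f ρ) = some b
      rw [if_neg hne]; exact hb
  · -- fresh point case
    push_neg at hA1
    obtain ⟨a, haht, hav⟩ := exists_fresh (lg_lt_omega1 hσOK) p.v
    obtain ⟨n0, hn0⟩ : ∃ n0 : ℕ, ∀ y ∈ p.v, p.c y ≠ some n0 := ⟨_, sup_c_fresh p⟩
    set Dn : omega1.{0}.ToType → Prop := fun x => p.lt x b₀ ∧ htOf x < lg σ with hDn
    set Up : omega1.{0}.ToType → Prop := fun y =>
      ∃ w, (w = b₀ ∨ (p.lt w b₀ ∧ lg σ < htOf w)) ∧ (y = w ∨ p.lt w y) with hUp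
    have hUpv : ∀ y, Up y → y ∈ p.v := by
      rintro y ⟨w, hw, hy⟩
      rcases hy with rfl | hy
      · rcases hw with rfl | hw
        · exact hb₀v
        · exact (hp.lt_dom _ _ hw.1).1
      · exact (hp.lt_dom _ _ hy).2
    have hUpht : ∀ y, Up y → lg σ < htOf y := by
      rintro y ⟨w, hw, hy⟩
      have hwht : lg σ < htOf w := by
        rcases hw with rfl | hw
        · exact hb₀ht ▸ hlgσ₀
        · exact hw.2
      rcases hy with rfl | hy
      · exact hwht
      · exact lt_trans hwht (hp.lt_ht _ _ hy)
    have hDnv : ∀ x, Dn x → x ∈ p.v := fun x hx => (hp.lt_dom _ _ hx.1).1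
    have hUpa : ¬ Up a := fun h => hav (hUpv a h)
    have hDna : ¬ Dn a := fun h => hav (hDnv a h)
    have hUp_cl : ∀ y z, Up y → p.lt y z → Up z := by
      rintro y z ⟨w, hw, hy⟩ hz
      rcases hy with rfl | hy
      · exact ⟨y, hw, Or.inr hz⟩
      · exact ⟨w, hw, Or.inr (hp.lt_trans _ _ _ hy hz)⟩
    have hDn_cl : ∀ x y, p.lt x y → Dn y → Dn x := by
      rintro x y hxy ⟨h1, h2⟩
      exact ⟨hp.lt_trans _ _ _ hxy h1, lt_trans (hp.lt_ht _ _ hxy) h2⟩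
    have hDU : ∀ x z, Dn x → Up z → p.lt x z := by
      rintro x z ⟨hx1, hx2⟩ ⟨w, hw, hz⟩
      have hxw : p.lt x w := by
        rcases hw with rfl | hw
        · exact hx1
        · rcases hp.lt_pred_linear x w b₀ hx1 hw.1 with h | h | h
          · exact h
          · exact absurd (lt_trans (hp.lt_ht _ _ h) hx2) (asymm hw.2)
          · exact absurd (h ▸ hx2) (asymm hw.2)
      rcases hz with rfl | hz
      · exact hxw
      · exact hp.lt_trans _ _ _ hxw hz
    have hkey : ∀ y, Up y → ∀ d, p.lt d y → Dn d ∨ Up d := by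
      have htri : ∀ d, p.lt d b₀ → Dn d ∨ Up d := by
        intro d hd
        rcases lt_trichotomy (htOf d) (lg σ) with h | h | h
        · exact Or.inl ⟨hd, h⟩
        · exact absurd h (hA1 d hd)
        · exact Or.inr ⟨d, Or.inr ⟨hd, h⟩, Or.inl rfl⟩
      rintro y ⟨w, hw, hy⟩ d hd
      have hdw : p.lt d w ∨ d = w ∨ p.lt w d := by
        rcases hy with rfl | hy
        · exact Or.inl hd
        · rcases hp.lt_pred_linear d w y hd hy with h | h | h
          · exact Or.inl h
          · exact Or.inr (Or.inr h)
          · exact Or.inr (Or.inl h)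
      rcases hdw with hdw | rfl | hdw
      · rcases hw with rfl | hw
        · exact htri d hdw
        · exact htri d (hp.lt_trans _ _ _ hdw hw.1)
      · exact Or.inr ⟨d, hw, Or.inl rfl⟩
      · exact Or.inr ⟨w, hw, Or.inr hdw⟩
    refine ⟨⟨insert σ p.u, insert a p.v,
      fun x y => p.lt x y ∨ (x = a ∧ Up y) ∨ (Dn x ∧ y = a),
      fun τ => if τ = σ then some a else p.f τ,
      fun x => if x = a then some n0 else p.c x⟩, ?_, ?_, rfl⟩
    · refine ⟨?_, ?_, ?_, ?_, ?_, ?_, ?_, ?_, ?_, ?_, ?_, ?_, ?_, ?_, ?_⟩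
      · -- u_sub
        intro ρ hρ
        rcases Finset.mem_insert.1 hρ with h | h
        · exact h ▸ hσT
        · exact hp.u_sub ρ h
      · exact Finset.mem_insert_of_mem hp.u_root
      · -- u_meet
        intro ρ hρ τ hτ
        rcases Finset.mem_insert.1 hρ with h | h
        · rcases Finset.mem_insert.1 hτ with h' | h'
          · rw [h, h', meet_self]; exact Finset.mem_insert_self _ _
          · rw [h]; exact hmeet τ h'
        · rcases Finset.mem_insert.1 hτ with h' | h'
          · rw [h', meet_comm]; exact hmeet ρ h
          · exact Finset.mem_insert_of_mem (hp.u_meet ρ h τ h')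
      · -- lt_dom
        rintro x y (h | ⟨h1, h2⟩ | ⟨h1, h2⟩)
        · exact ⟨Finset.mem_insert_of_mem (hp.lt_dom _ _ h).1,
            Finset.mem_insert_of_mem (hp.lt_dom _ _ h).2⟩
        · exact ⟨h1 ▸ Finset.mem_insert_self _ _, Finset.mem_insert_of_mem (hUpv y h2)⟩
        · exact ⟨Finset.mem_insert_of_mem (hDnv x h1), h2 ▸ Finset.mem_insert_self _ _⟩
      · -- lt_irrefl
        rintro x (h | ⟨h1, h2⟩ | ⟨h1, h2⟩)
        · exact hp.lt_irrefl x h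
        · exact hUpa (h1 ▸ h2)
        · exact hDna (h2 ▸ h1)
      · -- lt_trans
        rintro x y z (h1 | ⟨ha1, ha2⟩ | ⟨ha1, ha2⟩) (h2 | ⟨hb1, hb2⟩ | ⟨hb1, hb2⟩)
        · exact Or.inl (hp.lt_trans _ _ _ h1 h2)
        · exact absurd (hb1 ▸ h1) (fun h => hav (hp.lt_dom _ _ h).2)
        · exact Or.inr (Or.inr ⟨hDn_cl x y h1 hb1, hb2⟩)
        · exact Or.inr (Or.inl ⟨ha1, hUp_cl y z ha2 h2⟩)
        · refine absurd ?_ hUpa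
          rw [← hb1]; exact ha2
        · exact absurd (hUpht y ha2) (asymm hb1.2)
        · refine absurd ?_ (fun h => hav (hp.lt_dom a z h).1)
          rw [← ha2]; exact h2
        · exact Or.inl (hDU x z ha1 hb2)
        · refine absurd ?_ hDna
          rw [← ha2]; exact hb1
      · -- lt_ht
        rintro x y (h | ⟨h1, h2⟩ | ⟨h1, h2⟩)
        · exact hp.lt_ht _ _ h
        · exact h1 ▸ (haht ▸ hUpht y h2)
        · exact h2 ▸ (haht ▸ h1.2)
      · -- lt_pred_linear
        rintro x y z (h1 | ⟨ha1, ha2⟩ | ⟨ha1, ha2⟩) (h2 | ⟨hb1, hb2⟩ | ⟨hb1, hb2⟩)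
        · rcases hp.lt_pred_linear x y z h1 h2 with h | h | h
          · exact Or.inl (Or.inl h)
          · exact Or.inr (Or.inl (Or.inl h))
          · exact Or.inr (Or.inr h)
        · -- y = a, Up z, p.lt x z
          rcases hkey z hb2 x h1 with h | h
          · exact Or.inl (Or.inr (Or.inr ⟨h, hb1⟩))
          · exact Or.inr (Or.inl (Or.inr (Or.inl ⟨hb1, h⟩)))
        · exact absurd (hb2 ▸ h1) (fun h => hav (hp.lt_dom _ _ h).2)
        · rcases hkey z ha2 y h2 with h | h
          · exact Or.inr (Or.inl (Or.inr (Or.inr ⟨h, ha1⟩)))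
          · exact Or.inl (Or.inr (Or.inl ⟨ha1, h⟩))
        · exact Or.inr (Or.inr (ha1.trans hb1.symm))
        · exact absurd (hb2 ▸ ha2) hUpa
        · exact absurd (ha2 ▸ h2) (fun h => hav (hp.lt_dom _ _ h).2)
        · exact absurd (ha2 ▸ hb2) hUpa
        · rcases hp.lt_pred_linear x y b₀ ha1.1 hb1.1 with h | h | h
          · exact Or.inl (Or.inl h)
          · exact Or.inr (Or.inl (Or.inl h))
          · exact Or.inr (Or.inr h)
      · -- f_dom
        dsimp only
        intro ρ
        by_cases hρσ : ρ = σ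
        · rw [if_pos hρσ, hρσ]; simp
        · rw [if_neg hρσ, hp.f_dom ρ]
          simp [Finset.mem_insert, hρσ]
      · -- f_ran
        dsimp only
        intro ρ b hb
        by_cases hρσ : ρ = σ
        · rw [if_pos hρσ] at hb
          exact (Option.some_inj.1 hb) ▸ Finset.mem_insert_self _ _
        · rw [if_neg hρσ] at hb
          exact Finset.mem_insert_of_mem (hp.f_ran ρ b hb)
      · -- f_surj
        dsimp only
        intro b hb
        rcases Finset.mem_insert.1 hb with h | h
        · exact ⟨σ, Finset.mem_insert_self _ _, by rw [if_pos rfl, h]⟩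
        · obtain ⟨ρ, hρ, hρf⟩ := hp.f_surj b h
          have hne : ρ ≠ σ := fun he => hσu (he ▸ hρ)
          exact ⟨ρ, Finset.mem_insert_of_mem hρ, by rw [if_neg hne]; exact hρf⟩
      · -- f_mono
        dsimp only
        intro ρ hρ τ hτ hlt b e hb he
        by_cases hρσ : ρ = σ
        · by_cases hτσ : τ = σ
          · exact absurd (hρσ.trans hτσ.symm) hlt.2
          · have hτu : τ ∈ p.u := (Finset.mem_insert.1 hτ).resolve_left hτσ
            rw [if_pos hρσ] at hb
            rw [if_neg hτσ] at he
            refine Or.inr (Or.inl ⟨(Option.some_inj.1 hb).symm, ?_⟩)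
            rcases hUpf τ hτu (hρσ ▸ hlt) e he with rfl | h
            · exact ⟨e, Or.inl rfl, Or.inl rfl⟩
            · exact ⟨b₀, Or.inl rfl, Or.inr h⟩
        · have hρu : ρ ∈ p.u := (Finset.mem_insert.1 hρ).resolve_left hρσ
          rw [if_neg hρσ] at hb
          by_cases hτσ : τ = σ
          · rw [if_pos hτσ] at he
            obtain ⟨h1, h2⟩ := hDownf ρ hρu (hτσ ▸ hlt) b hb
            exact Or.inr (Or.inr ⟨⟨h1, h2⟩, (Option.some_inj.1 he).symm⟩)
          · have hτu : τ ∈ p.u := (Finset.mem_insert.1 hτ).resolve_left hτσ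
            rw [if_neg hτσ] at he
            exact Or.inl (hp.f_mono ρ hρu τ hτu hlt b e hb he)
      · -- f_ht
        dsimp only
        intro ρ b hb
        by_cases hρσ : ρ = σ
        · rw [if_pos hρσ] at hb
          rw [← Option.some_inj.1 hb, haht, hρσ]
        · rw [if_neg hρσ] at hb
          exact hp.f_ht ρ b hb
      · -- c_dom
        dsimp only
        intro x
        by_cases hxa : x = a
        · rw [if_pos hxa, hxa]; simp
        · rw [if_neg hxa, hp.c_dom x]
          simp [Finset.mem_insert, hxa]
      · -- c_spec
        dsimp only
        rintro x y (h | ⟨h1, h2⟩ | ⟨h1, h2⟩)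
        · have hxa : x ≠ a := fun he => hav (he ▸ (hp.lt_dom _ _ h).1)
          have hya : y ≠ a := fun he => hav (he ▸ (hp.lt_dom _ _ h).2)
          rw [if_neg hxa, if_neg hya]
          exact hp.c_spec x y h
        · have hyv := hUpv y h2
          have hya : y ≠ a := fun he => hav (he ▸ hyv)
          rw [if_pos h1, if_neg hya]
          exact fun hcon => hn0 y hyv hcon.symm
        · have hxv := hDnv x h1
          have hxa : x ≠ a := fun he => hav (he ▸ hxv)
          rw [if_neg hxa, if_pos h2]
          exact hn0 x hxv
    · refine ⟨Finset.subset_insert _ _, Finset.subset_insert _ _,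
        fun x y h => Or.inl h, ?_, ?_⟩
      · intro ρ b hb
        have hρu : ρ ∈ p.u := (hp.f_dom ρ).1 (by rw [hb]; simp)
        have hne : ρ ≠ σ := fun he => hσu (he ▸ hρu)
        show (if ρ = σ then some a else p.f ρ) = some b
        rw [if_neg hne]; exact hb
      · intro x n h
        have hx : x ∈ p.v := (hp.c_dom x).1 (by rw [h]; simp)
        have hxa : x ≠ a := fun he => hav (he ▸ hx)
        show (if x = a then some n0 else p.c x) = some n
        rw [if_neg hxa]; exact h

lemma extend_one {Tc : Set Sseq} {p : PCond} (hT : PAmbientOK Tc) (hp : PValid Tc p)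
    {σ : Sseq} (hσT : σ ∈ Tc) (hσu : σ ∉ p.u)
    (hmeet : ∀ τ ∈ p.u, meetSeq σ τ ∈ insert σ p.u) :
    ∃ q, PValid Tc q ∧ PLe p q ∧ q.u = insert σ p.u := by
  by_cases hW : ∃ τ ∈ p.u, seqLT σ τ
  · exact extend_one_A hT hp hσT hσu hmeet hW
  · push_neg at hW
    exact extend_one_B hT hp hσT hσu hmeet hW

lemma meet_eq_self_of_le {σ ρ : Sseq} (hσ : IsSeqOK σ) (h : seqLE σ ρ) :
    meetSeq σ ρ = σ := by
  funext ξ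
  simp only [meetSeq]
  split
  · rfl
  · next hg =>
    push_neg at hg
    obtain ⟨η, hη, hne⟩ := hg
    have hηn : σ η = none := by
      cases hσn : σ η with
      | none => rfl
      | some d => exact absurd (h η d hσn) (fun he => hne (hσn.trans he.symm))
    symm
    rw [isSeqOK_none_iff hσ] at hηn ⊢
    exact le_trans hηn (oVal_le_iff.2 hη)

lemma meet_mem_Tc {Tc : Set Sseq} (hT : PAmbientOK Tc) {ρ : Sseq} (hρ : ρ ∈ Tc)
    (τ : Sseq) : meetSeq ρ τ ∈ Tc := by
  obtain ⟨b, hb⟩ := meet_eq_restrict (hT.1 ρ hρ) τ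
  rw [hb]
  exact hT.2.2.1 ρ hρ b

lemma extend_main {Tc : Set Sseq} (hT : PAmbientOK Tc) {ρ : Sseq} (hρT : ρ ∈ Tc) :
    ∀ (n : ℕ) (p : PCond), PValid Tc p →
      ((insert ρ (p.u.image (meetSeq ρ))) \ p.u).card ≤ n →
      ∃ q, PValid Tc q ∧ PLe p q ∧ ρ ∈ q.u := by
  classical
  have hρOK := hT.1 ρ hρT
  intro n
  induction n with
  | zero =>
    intro p hp hcard
    by_cases hρu : ρ ∈ p.u
    · exact ⟨p, hp, PLe_refl p, hρu⟩
    · exfalso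
      have : ρ ∈ (insert ρ (p.u.image (meetSeq ρ))) \ p.u :=
        Finset.mem_sdiff.2 ⟨Finset.mem_insert_self _ _, hρu⟩
      have := Finset.card_pos.2 ⟨ρ, this⟩
      omega
  | succ n ih =>
    intro p hp hcard
    by_cases hρu : ρ ∈ p.u
    · exact ⟨p, hp, PLe_refl p, hρu⟩
    set N := (insert ρ (p.u.image (meetSeq ρ))) \ p.u with hNdef
    have hρN : ρ ∈ N := Finset.mem_sdiff.2 ⟨Finset.mem_insert_self _ _, hρu⟩
    obtain ⟨σ, hσN, hσmin⟩ := Finset.exists_min_image N lg ⟨ρ, hρN⟩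
    -- facts about members of N
    have hNfact : ∀ χ ∈ N, seqLE χ ρ ∧ χ ∈ Tc ∧ χ ∉ p.u := by
      intro χ hχ
      obtain ⟨hχ1, hχ2⟩ := Finset.mem_sdiff.1 hχ
      rcases Finset.mem_insert.1 hχ1 with h | h
      · exact ⟨h ▸ seqLE_refl ρ, h ▸ hρT, hχ2⟩
      · obtain ⟨τ, hτ, rfl⟩ := Finset.mem_image.1 h
        exact ⟨meet_seqLE_left ρ τ, meet_mem_Tc hT hρT τ, hχ2⟩
    obtain ⟨hσρ, hσT, hσu⟩ := hNfact σ hσN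
    have hσOK := hT.1 σ hσT
    obtain ⟨b, hb⟩ := oVal_surj (lg_lt_omega1 hσOK)
    have hσrb : σ = restrictSeq ρ b := eq_restrict_of_seqLE hσOK hσρ hb
    -- meets with σ stay inside
    have hmeet : ∀ τ ∈ p.u, meetSeq σ τ ∈ insert σ p.u := by
      intro τ hτ
      have hmm : meetSeq σ τ = restrictSeq (meetSeq ρ τ) b := by
        rw [hσrb, meet_restrict_left]
      have hχT : meetSeq ρ τ ∈ Tc := meet_mem_Tc hT hρT τ
      have hχOK := hT.1 _ hχT
      have hχρ : seqLE (meetSeq ρ τ) ρ := meet_seqLE_left ρ τ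
      rcases le_or_gt (lg (meetSeq ρ τ)) (oVal b) with hle | hlt
      · rw [hmm, restrict_eq_self hχOK hle]
        by_cases hm : meetSeq ρ τ ∈ p.u
        · exact Finset.mem_insert_of_mem hm
        · have hmN : meetSeq ρ τ ∈ N := Finset.mem_sdiff.2
            ⟨Finset.mem_insert_of_mem (Finset.mem_image_of_mem _ hτ), hm⟩
          have h1 : lg σ ≤ lg (meetSeq ρ τ) := hσmin _ hmN
          have h2 : lg (meetSeq ρ τ) ≤ lg σ := hb ▸ hle
          have : meetSeq ρ τ = σ :=
            eq_of_seqLE_lg hχOK hσOK (seqLE_of_lg_le hχOK hσOK hχρ hσρ h2) h1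
          rw [this]
          exact Finset.mem_insert_self _ _
      · have : restrictSeq (meetSeq ρ τ) b = restrictSeq ρ b := by
          funext ξ
          simp only [restrictSeq]
          split
          · next hξ =>
            have hne : meetSeq ρ τ ξ ≠ none := (isSeqOK_some_iff hχOK ξ).2
              (lt_trans (oVal_lt_iff.2 hξ) hlt)
            obtain ⟨d, hd⟩ := Option.ne_none_iff_exists'.1 hne
            rw [hd, hχρ ξ d hd]
          · rfl
        rw [hmm, this, ← hσrb]
        exact Finset.mem_insert_self _ _
    obtain ⟨q1, hq1, hpq1, hq1u⟩ := extend_one hT hp hσT hσu hmeet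
    -- the new N is smaller
    have hsub : (insert ρ (q1.u.image (meetSeq ρ))) \ q1.u ⊆ N.erase σ := by
      intro χ hχ
      obtain ⟨h1, h2⟩ := Finset.mem_sdiff.1 hχ
      rw [hq1u] at h2
      have hχσ : χ ≠ σ := fun he => h2 (he ▸ Finset.mem_insert_self _ _)
      have hχu : χ ∉ p.u := fun he => h2 (Finset.mem_insert_of_mem he)
      refine Finset.mem_erase.2 ⟨hχσ, Finset.mem_sdiff.2 ⟨?_, hχu⟩⟩
      rcases Finset.mem_insert.1 h1 with h | h
      · exact h ▸ Finset.mem_insert_self _ _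
      · obtain ⟨τ, hτ, rfl⟩ := Finset.mem_image.1 h
        rw [hq1u] at hτ
        rcases Finset.mem_insert.1 hτ with h' | h'
        · exfalso
          apply hχσ
          rw [h', meet_comm]
          exact meet_eq_self_of_le hσOK hσρ
        · exact Finset.mem_insert_of_mem (Finset.mem_image_of_mem _ h')
    have hcard2 : ((insert ρ (q1.u.image (meetSeq ρ))) \ q1.u).card ≤ n := by
      have h1 := Finset.card_le_card hsub
      have h2 : (N.erase σ).card = N.card - 1 := Finset.card_erase_of_mem hσN
      have h3 : 1 ≤ N.card := Finset.card_pos.2 ⟨σ, hσN⟩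
      omega
    obtain ⟨q, hq, hq1q, hρq⟩ := ih q1 hq1 hcard2
    exact ⟨q, hq, PLe_trans hpq1 hq1q, hρq⟩

lemma dense_extend {Tc : Set Sseq} (hT : PAmbientOK Tc) {ρ : Sseq} (hρT : ρ ∈ Tc)
    {p : PCond} (hp : PValid Tc p) : ∃ q, PValid Tc q ∧ PLe p q ∧ ρ ∈ q.u :=
  extend_main hT hρT _ p hp le_rfl

lemma relHeight_eq_of_iso {X : Type} (lt : X → X → Prop) (x : X) (o : Ordinal.{0})
    (iso : (fun (a b : {y // lt y x}) => lt a.1 b.1) ≃r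
      ((· < ·) : o.ToType → o.ToType → Prop)) :
    relHeight lt x = o := by
  haveI hwo : IsWellOrder o.ToType (· < ·) := isWellOrder_lt
  have h : IsWellOrder {y // lt y x} (fun a b => lt a.1 b.1) :=
    iso.toRelEmbedding.isWellOrder
  rw [relHeight, dif_pos h]
  exact (Ordinal.type_eq.2 ⟨iso⟩).trans (Ordinal.type_toType o)

lemma countable_htOf_level (α : Ordinal.{0}) :
    {γ : omega1.{0}.ToType | htOf γ = α}.Countable := by
  classical
  rw [Set.countable_iff_exists_injOn]
  have hmod : ∀ γ : omega1.{0}.ToType, ∃ n : ℕ, oVal γ % Ordinal.omega0 = n :=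
    fun γ => Ordinal.lt_omega0.1 (Ordinal.mod_lt _ Ordinal.omega0_ne_zero)
  refine ⟨fun γ => (hmod γ).choose, ?_⟩
  intro γ hγ δ hδ he
  have he' : ((hmod γ).choose : ℕ) = (hmod δ).choose := he
  have h1 := (hmod γ).choose_spec
  have h2 := (hmod δ).choose_spec
  have h3 : oVal γ = oVal δ := by
    rw [← Ordinal.div_add_mod (oVal γ) Ordinal.omega0,
      ← Ordinal.div_add_mod (oVal δ) Ordinal.omega0]
    rw [mem_setOf_eq, htOf] at hγ hδ
    rw [hγ, hδ, h1, h2, he']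
  exact oVal_inj.1 h3

/-- There is a family of `ℵ₁` many dense subsets of `P(T)` such that for every filter
meeting all of them: the union of the orders of conditions in the filter makes the union
of the `vᵖ` into an Aronszajn tree `T*`, and the union of the `fᵖ` is a weak embedding of
`T` into `T*` with `ht (f ρ) = lg ρ` for every `ρ ∈ T`. -/
theorem PCond_generic (Tc : Set Sseq) (hT : PAmbientOK Tc)
    (hht : ∀ α : Ordinal.{0}, α < omega1.{0} → ∃ ρ ∈ Tc, lg ρ = α) :
    ∃ H : Set (Set {p : PCond // PValid Tc p}),
      Cardinal.mk H ≤ Cardinal.aleph.{0} 1 ∧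
      (∀ D ∈ H, ∀ p : {p : PCond // PValid Tc p}, ∃ q ∈ D, PLe p.1 q.1) ∧
      ∀ G : Set {p : PCond // PValid Tc p},
        (∀ p ∈ G, ∀ q ∈ G, ∃ s ∈ G, PLe p.1 s.1 ∧ PLe q.1 s.1) →
        (∀ p ∈ G, ∀ q : {p : PCond // PValid Tc p}, PLe q.1 p.1 → q ∈ G) →
        (∀ D ∈ H, (G ∩ D).Nonempty) →
        ∀ ltStar : omega1.{0}.ToType → omega1.{0}.ToType → Prop,
          (∀ a b, ltStar a b ↔ ∃ p ∈ G, (p : {p : PCond // _}).1.lt a b) →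
          ∀ V : Set omega1.{0}.ToType, V = {a | ∃ p ∈ G, a ∈ (p : {p : PCond // _}).1.v} →
          ∀ fStar : Sseq → Option omega1.{0}.ToType,
            (∀ ρ a, fStar ρ = some a ↔ ∃ p ∈ G, (p : {p : PCond // _}).1.f ρ = some a) →
            AronszajnOn V ltStar ∧
            (∀ ρ ∈ Tc, ∃ a, fStar ρ = some a ∧ a ∈ V ∧ relHeight ltStar a = lg ρ) ∧
            ∀ ρ ∈ Tc, ∀ τ ∈ Tc, seqLT ρ τ →
              ∀ a b, fStar ρ = some a → fStar τ = some b → ltStar a b := by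
  classical
  refine ⟨(fun ρ => {q : {p : PCond // PValid Tc p} | ρ ∈ q.1.u}) '' Tc, ?_, ?_, ?_⟩
  · exact le_trans Cardinal.mk_image_le (le_of_eq hT.2.2.2.1)
  · rintro D ⟨ρ, hρT, rfl⟩ p
    obtain ⟨q, hq, hpq, hρq⟩ := dense_extend hT hρT p.2
    exact ⟨⟨q, hq⟩, hρq, hpq⟩
  · intro G hdir hdc hgen ltStar hlt V hV fStar hf
    have hmeetsD : ∀ ρ ∈ Tc, ∃ p ∈ G, ρ ∈ p.1.u := by
      intro ρ hρ
      obtain ⟨p, hpG, hpD⟩ := hgen _ (Set.mem_image_of_mem _ hρ)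
      exact ⟨p, hpG, hpD⟩
    have hdir3 : ∀ p ∈ G, ∀ q ∈ G, ∀ r ∈ G,
        ∃ s ∈ G, PLe p.1 s.1 ∧ PLe q.1 s.1 ∧ PLe r.1 s.1 := by
      intro p hp q hq r hr
      obtain ⟨s1, hs1, h1, h2⟩ := hdir p hp q hq
      obtain ⟨s, hs, h3, h4⟩ := hdir s1 hs1 r hr
      exact ⟨s, hs, PLe_trans h1 h3, PLe_trans h2 h3, h4⟩
    -- basic facts about ltStar
    have hltsV : ∀ a b, ltStar a b → a ∈ V ∧ b ∈ V := by
      intro a b h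
      obtain ⟨p, hpG, hp⟩ := (hlt a b).1 h
      have := p.2.lt_dom a b hp
      rw [hV]
      exact ⟨⟨p, hpG, this.1⟩, ⟨p, hpG, this.2⟩⟩
    have hlts_ht : ∀ a b, ltStar a b → htOf a < htOf b := by
      intro a b h
      obtain ⟨p, hpG, hp⟩ := (hlt a b).1 h
      exact p.2.lt_ht a b hp
    have hlts_irr : ∀ a, ¬ ltStar a a := fun a h => lt_irrefl _ (hlts_ht a a h)
    have hlts_trans : ∀ a b c, ltStar a b → ltStar b c → ltStar a c := by
      intro a b c h1 h2
      obtain ⟨p, hpG, hp⟩ := (hlt a b).1 h1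
      obtain ⟨q, hqG, hq⟩ := (hlt b c).1 h2
      obtain ⟨s, hsG, hps, hqs⟩ := hdir p hpG q hqG
      exact (hlt a c).2 ⟨s, hsG, s.2.lt_trans a b c (hps.2.2.1 _ _ hp) (hqs.2.2.1 _ _ hq)⟩
    have hpred_lin : ∀ y z x, ltStar y x → ltStar z x →
        ltStar y z ∨ ltStar z y ∨ y = z := by
      intro y z x h1 h2
      obtain ⟨p, hpG, hp⟩ := (hlt y x).1 h1
      obtain ⟨q, hqG, hq⟩ := (hlt z x).1 h2
      obtain ⟨s, hsG, hps, hqs⟩ := hdir p hpG q hqG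
      rcases s.2.lt_pred_linear y z x (hps.2.2.1 _ _ hp) (hqs.2.2.1 _ _ hq) with h | h | h
      · exact Or.inl ((hlt y z).2 ⟨s, hsG, h⟩)
      · exact Or.inr (Or.inl ((hlt z y).2 ⟨s, hsG, h⟩))
      · exact Or.inr (Or.inr h)
    -- fStar is total on Tc
    have hfTc : ∀ ρ ∈ Tc, ∃ a, fStar ρ = some a ∧ a ∈ V ∧ htOf a = lg ρ := by
      intro ρ hρ
      obtain ⟨p, hpG, hpu⟩ := hmeetsD ρ hρ
      obtain ⟨a, haf, hav, haht⟩ := p.2.f_some hpu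
      refine ⟨a, (hf ρ a).2 ⟨p, hpG, haf⟩, ?_, haht⟩
      rw [hV]
      exact ⟨p, hpG, hav⟩
    -- weak embedding property
    have hmono : ∀ ρ ∈ Tc, ∀ τ ∈ Tc, seqLT ρ τ →
        ∀ a b, fStar ρ = some a → fStar τ = some b → ltStar a b := by
      intro ρ _ τ _ hρτ a b ha hb
      obtain ⟨p, hpG, hp⟩ := (hf ρ a).1 ha
      obtain ⟨q, hqG, hq⟩ := (hf τ b).1 hb
      obtain ⟨s, hsG, hps, hqs⟩ := hdir p hpG q hqG
      have hsa : s.1.f ρ = some a := hps.2.2.2.1 _ _ hp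
      have hsb : s.1.f τ = some b := hqs.2.2.2.1 _ _ hq
      have hρu : ρ ∈ s.1.u := (s.2.f_dom ρ).1 (by rw [hsa]; simp)
      have hτu : τ ∈ s.1.u := (s.2.f_dom τ).1 (by rw [hsb]; simp)
      exact (hlt a b).2 ⟨s, hsG, s.2.f_mono ρ hρu τ hτu hρτ a b hsa hsb⟩
    -- every element of V has predecessors at every smaller height
    have hpredfull : ∀ a ∈ V, ∀ β, β < htOf a → ∃ c, ltStar c a ∧ htOf c = β := by
      intro a haV β hβ
      rw [hV] at haV
      obtain ⟨p, hpG, hav⟩ := haV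
      obtain ⟨ρ, hρu, hρf⟩ := p.2.f_surj a hav
      have hρT : ρ ∈ Tc := p.2.u_sub ρ hρu
      have hρOK := hT.1 ρ hρT
      have hht' : htOf a = lg ρ := p.2.f_ht ρ a hρf
      obtain ⟨b, hb⟩ := oVal_surj (lt_trans hβ (htOf_lt_omega1 a))
      have hσT : restrictSeq ρ b ∈ Tc := hT.2.2.1 ρ hρT b
      have hσOK := hT.1 _ hσT
      have hlgσ : lg (restrictSeq ρ b) = β := by
        rw [lg_restrict hρOK, hb, min_eq_left (le_of_lt (hht' ▸ hβ))]
      have hlt2 : seqLT (restrictSeq ρ b) ρ :=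
        seqLT_of_le_lg hσOK hρOK (restrict_seqLE ρ b) (by rw [hlgσ, ← hht']; exact hβ)
      obtain ⟨c, hcf, hcV, hcht⟩ := hfTc _ hσT
      refine ⟨c, ?_, by rw [hcht, hlgσ]⟩
      exact hmono _ hσT ρ hρT hlt2 c a hcf ((hf ρ a).2 ⟨p, hpG, hρf⟩)
    -- relHeight computation
    have hrel : ∀ a, a ∈ V → relHeight ltStar a = htOf a := by
      intro a haV
      have hbnd : ∀ y : {y // ltStar y a}, htOf y.1 < htOf a := fun y => hlts_ht _ _ y.2
      set φ : {y // ltStar y a} → (htOf a).ToType :=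
        fun y => (Ordinal.ToType.mk (o := (htOf a))) ⟨htOf y.1, hbnd y⟩ with hφ
      have hφltht : ∀ y z : {y // ltStar y a}, φ y < φ z ↔ htOf y.1 < htOf z.1 := by
        intro y z
        rw [hφ, OrderIso.lt_iff_lt]; exact Iff.rfl
      have hφlt : ∀ y z : {y // ltStar y a}, φ y < φ z ↔ ltStar y.1 z.1 := by
        intro y z
        rw [hφltht]
        constructor
        · intro hht'
          rcases hpred_lin y.1 z.1 a y.2 z.2 with h1 | h1 | h1
          · exact h1
          · exact absurd (hlts_ht _ _ h1) (asymm hht')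
          · exact absurd (h1 ▸ hht') (lt_irrefl _)
        · exact hlts_ht _ _
      have hinj : Function.Injective φ := by
        intro y z h
        have hht' : htOf y.1 = htOf z.1 := by
          by_contra hne
          rcases lt_or_gt_of_ne hne with h' | h'
          · exact absurd ((hφltht y z).2 h') (h ▸ lt_irrefl _)
          · exact absurd ((hφltht z y).2 h') (h ▸ lt_irrefl _)
        rcases hpred_lin y.1 z.1 a y.2 z.2 with h1 | h1 | h1
        · exact absurd (hlts_ht _ _ h1) (hht' ▸ lt_irrefl _)
        · exact absurd (hlts_ht _ _ h1) (hht' ▸ lt_irrefl _)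
        · exact Subtype.ext h1
      have hsurj : Function.Surjective φ := by
        intro γ
        have hβlt : ((((Ordinal.ToType.mk (o := (htOf a)))).symm γ : Set.Iio (htOf a)) : Ordinal.{0}) < htOf a :=
          (((Ordinal.ToType.mk (o := (htOf a)))).symm γ).2
        obtain ⟨c, hca, hcht⟩ := hpredfull a haV _ hβlt
        refine ⟨⟨c, hca⟩, ?_⟩
        have h2 : (⟨htOf c, hbnd ⟨c, hca⟩⟩ : Set.Iio (htOf a)) =
            ((Ordinal.ToType.mk (o := (htOf a)))).symm γ := Subtype.ext hcht
        show (Ordinal.ToType.mk (o := (htOf a))) ⟨htOf c, hbnd ⟨c, hca⟩⟩ = γ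
        rw [h2, OrderIso.apply_symm_apply]
      exact relHeight_eq_of_iso ltStar a (htOf a)
        ⟨Equiv.ofBijective φ ⟨hinj, hsurj⟩, @fun y z => hφlt y z⟩
    -- c-values give injections on chains
    have hcval : ∀ x ∈ V, ∃ n : ℕ, ∃ p ∈ G, (p : {p : PCond // PValid Tc p}).1.c x = some n := by
      intro x hx
      rw [hV] at hx
      obtain ⟨p, hpG, hxv⟩ := hx
      obtain ⟨n, hn⟩ := Option.ne_none_iff_exists'.1 ((p.2.c_dom x).2 hxv)
      exact ⟨n, p, hpG, hn⟩
    have hchain : ∀ C ⊆ V, (∀ x ∈ C, ∀ y ∈ C, x ≠ y → ltStar x y ∨ ltStar y x) →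
        C.Countable := by
      intro C hCV hcomp
      rw [Set.countable_iff_exists_injOn]
      refine ⟨fun x => if hx : x ∈ V then (hcval x hx).choose else 0, ?_⟩
      intro x hx y hy he
      by_contra hne
      have hxV := hCV hx
      have hyV := hCV hy
      simp only [dif_pos hxV, dif_pos hyV] at he
      obtain ⟨p, hpG, hpx⟩ := (hcval x hxV).choose_spec
      obtain ⟨q, hqG, hqy⟩ := (hcval y hyV).choose_spec
      have hlt2 : ltStar x y ∨ ltStar y x := hcomp x hx y hy hne
      have : ∃ s ∈ G, s.1.lt x y ∨ s.1.lt y x := by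
        rcases hlt2 with h | h
        · obtain ⟨r, hrG, hr⟩ := (hlt x y).1 h
          exact ⟨r, hrG, Or.inl hr⟩
        · obtain ⟨r, hrG, hr⟩ := (hlt y x).1 h
          exact ⟨r, hrG, Or.inr hr⟩
      obtain ⟨r, hrG, hr⟩ := this
      obtain ⟨s, hsG, hps, hqs, hrs⟩ := hdir3 p hpG q hqG r hrG
      have hsx : s.1.c x = some ((hcval x hxV).choose) := hps.2.2.2.2 _ _ hpx
      have hsy : s.1.c y = some ((hcval y hyV).choose) := hqs.2.2.2.2 _ _ hqy
      have hnec : s.1.c x ≠ s.1.c y := by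
        rcases hr with h | h
        · exact s.2.c_spec x y (hrs.2.2.1 _ _ h)
        · exact (s.2.c_spec y x (hrs.2.2.1 _ _ h)).symm
      rw [hsx, hsy, he] at hnec
      exact hnec rfl
    refine ⟨⟨⟨⟨hltsV, hlts_irr, hlts_trans⟩, fun x _ y z hy hz => hpred_lin y z x hy hz, ?_⟩,
      ?_, ?_, ?_, hchain⟩, ?_, hmono⟩
    · -- well-foundedness of predecessors
      intro x _
      have : Subrelation (fun (a b : {y | ltStar y x}) => ltStar a.1 b.1)
          (InvImage (· < ·) (fun a : {y | ltStar y x} => htOf a.1)) :=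
        fun h => hlts_ht _ _ h
      exact this.wf (InvImage.wf _ Ordinal.lt_wf)
    · -- all heights realized
      intro α hα
      obtain ⟨ρ, hρT, hρlg⟩ := hht α hα
      obtain ⟨a, _, haV, haht⟩ := hfTc ρ hρT
      exact ⟨a, haV, by rw [hrel a haV, haht, hρlg]⟩
    · -- heights below ω₁
      intro x hx
      rw [hrel x hx]
      exact htOf_lt_omega1 x
    · -- countable levels
      intro α
      refine Set.Countable.mono ?_ (countable_htOf_level α)
      rintro x ⟨hxV, hxht⟩
      rw [mem_setOf_eq, ← hrel x hxV]
      exact hxht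
    · -- fStar total with correct heights
      intro ρ hρ
      obtain ⟨a, haf, haV, haht⟩ := hfTc ρ hρ
      exact ⟨a, haf, haV, by rw [hrel a haV, haht]⟩
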